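/- For vectors v, w in R^3 and r on the unit sphere, the Lie bracket of the vector fields X[v](r) = v - r⟨v,r⟩ and X[w](r) = w - r⟨w,r⟩ satisfies [X[v], X[w]](r) = (v × w) × r = Y[v × w](r) for all r with |r| = 1. -/
import Mathlib


open Matrix

/-- Lie bracket of vector fields on ℝ³: `[X,Y](r) = DY(r)·X(r) - DX(r)·Y(r)`. -/
noncomputable def vfBracket (X Y : (Fin 3 → ℝ) → (Fin 3 → ℝ)) (r : Fin 3 → ℝ) : Fin 3 → ℝ :=
  fderiv ℝ Y r (X r) - fderiv ℝ X r (Y r)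

/-- The boost vector field `X[v](r) = v - r⟨v,r⟩`. -/
def Xfield (v : Fin 3 → ℝ) : (Fin 3 → ℝ) → (Fin 3 → ℝ) := fun r => v - (v ⬝ᵥ r) • r

/-- The rotational vector field `Y[v](r) = v × r`. -/
def Yfield (v : Fin 3 → ℝ) : (Fin 3 → ℝ) → (Fin 3 → ℝ) := fun r => crossProduct v r

noncomputable def dotCLM (v : Fin 3 → ℝ) : (Fin 3 → ℝ) →L[ℝ] ℝ :=
  LinearMap.toContinuousLinearMap
    { toFun := fun r => v ⬝ᵥ r
      map_add' := fun a b => dotProduct_add v a b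
      map_smul' := fun c a => by simp [dotProduct_smul] }

lemma fderiv_Xfield (v r u : Fin 3 → ℝ) :
    fderiv ℝ (Xfield v) r u = -((v ⬝ᵥ u) • r) - (v ⬝ᵥ r) • u := by
  have h : HasFDerivAt (Xfield v)
      (0 - ((v ⬝ᵥ r) • ContinuousLinearMap.id ℝ (Fin 3 → ℝ)
        + (dotCLM v).smulRight r)) r := by
    have h1 : HasFDerivAt (fun x : Fin 3 → ℝ => (v ⬝ᵥ x) • x)
        ((v ⬝ᵥ r) • ContinuousLinearMap.id ℝ (Fin 3 → ℝ) + (dotCLM v).smulRight r) r := by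
      have := ((dotCLM v).hasFDerivAt (x := r)).smul (hasFDerivAt_id r)
      simpa [dotCLM] using this
    simpa [Xfield] using (hasFDerivAt_const v r).sub h1
  rw [h.fderiv]
  simp [dotCLM]
  abel

theorem stmt1 (v w r : Fin 3 → ℝ) (hr : r ⬝ᵥ r = 1) :
    vfBracket (Xfield v) (Xfield w) r = crossProduct (crossProduct v w) r ∧
    vfBracket (Xfield v) (Xfield w) r = Yfield (crossProduct v w) r := by
  have key : vfBracket (Xfield v) (Xfield w) r = crossProduct (crossProduct v w) r := by
    unfold vfBracket
    rw [fderiv_Xfield, fderiv_Xfield]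
    funext i
    fin_cases i <;>
      simp [Xfield, crossProduct, dotProduct, Fin.sum_univ_three] <;>
      ring_nf
  exact ⟨key, by simpa [Yfield] using key⟩
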